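/- Let φ be a unit vector in ℂ⁴ all of whose coordinates are real numbers. Then there exist 2×2 real orthogonal matrices K₁, K₂ and W₁ such that (K₁ ⊗ K₂)·cz·(I ⊗ W₁)·φ = |00⟩, where I is the 2×2 identity matrix. In other words, every real 2-qubit state can be prepared using real local gates and at most one controlled-Z gate. -/

import Mathlib

open Matrix Complex
open scoped ComplexConjugate

noncomputable section

/-- bit of qubit 1 (leftmost) in the index `2a+b`. -/
def bitHi (i : Fin 4) : Fin 2 := ⟨i.val / 2, by have := i.isLt; omega⟩
/-- bit of qubit 0 (rightmost). -/
def bitLo (i : Fin 4) : Fin 2 := ⟨i.val % 2, by omega⟩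

/-- Kronecker product `U ⊗ V` acting on `ℂ⁴`, with `|ab⟩` at index `2a+b`. -/
def kron2 (U V : Matrix (Fin 2) (Fin 2) ℂ) : Matrix (Fin 4) (Fin 4) ℂ :=
  fun i j => U (bitHi i) (bitHi j) * V (bitLo i) (bitLo j)

/-- The controlled-Z gate on two qubits. -/
def czGate : Matrix (Fin 4) (Fin 4) ℂ := diagonal ![1, 1, 1, -1]

/-- The matrix `T(φ)` of a 2-qubit state vector. -/
def Tmat (φ : Fin 4 → ℂ) : Matrix (Fin 2) (Fin 2) ℂ := !![φ 0, φ 1; φ 2, φ 3]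

/-- The basis state `|00⟩` in `ℂ⁴`. -/
def e00 : Fin 4 → ℂ := ![1, 0, 0, 0]

/-- Inclusion of a real 2×2 matrix into the complex 2×2 matrices. -/
def mc (W : Matrix (Fin 2) (Fin 2) ℝ) : Matrix (Fin 2) (Fin 2) ℂ :=
  W.map (fun r => (r : ℂ))


lemma memO1 (a b : ℝ) (h : a^2 + b^2 = 1) :
    !![a, b; -b, a] ∈ Matrix.orthogonalGroup (Fin 2) ℝ := by
  rw [Matrix.mem_orthogonalGroup_iff]
  ext i j
  fin_cases i <;> fin_cases j <;>
    simp [Matrix.mul_apply, Fin.sum_univ_two, Matrix.star_eq_conjTranspose,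
      Matrix.conjTranspose_apply, Matrix.one_apply, Matrix.transpose_apply, Matrix.vecHead, Matrix.vecTail] <;> nlinarith [h]

lemma memO2 (a b : ℝ) (h : a^2 + b^2 = 1) :
    !![a, b; b, -a] ∈ Matrix.orthogonalGroup (Fin 2) ℝ := by
  rw [Matrix.mem_orthogonalGroup_iff]
  ext i j
  fin_cases i <;> fin_cases j <;>
    simp [Matrix.mul_apply, Fin.sum_univ_two, Matrix.star_eq_conjTranspose,
      Matrix.conjTranspose_apply, Matrix.one_apply, Matrix.transpose_apply, Matrix.vecHead, Matrix.vecTail] <;> nlinarith [h]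

set_option maxHeartbeats 1000000 in
lemma keylem (a b c d : ℝ) (h1 : a*d - b*c = 0) (h2 : a^2+b^2+c^2+d^2 = 1) :
    ∃ K₁ ∈ Matrix.orthogonalGroup (Fin 2) ℝ, ∃ K₂ ∈ Matrix.orthogonalGroup (Fin 2) ℝ,
      K₁ * !![a, b; c, d] * K₂ᵀ = !![1, 0; 0, 0] := by
  by_cases hcd : c = 0 ∧ d = 0
  · obtain ⟨hc, hd⟩ := hcd
    refine ⟨1, one_mem _, !![a, b; -b, a], memO1 a b (by nlinarith), ?_⟩
    subst hc hd
    ext i j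
    fin_cases i <;> fin_cases j <;>
      simp [Matrix.mul_apply, Fin.sum_univ_two, Matrix.transpose_apply,
        Matrix.one_apply, Matrix.vecHead, Matrix.vecTail] <;> nlinarith
  · have hcd' : 0 < c^2 + d^2 := by
      rcases not_and_or.mp hcd with h | h <;>
        [skip; skip] <;> positivity
    set ρ := Real.sqrt (c^2 + d^2) with hρdef
    have hρpos : 0 < ρ := Real.sqrt_pos.mpr hcd'
    have hρne : ρ ≠ 0 := ne_of_gt hρpos
    have hρ2 : ρ^2 = c^2 + d^2 := Real.sq_sqrt (le_of_lt hcd')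
    have hK1mem : ((a*c+b*d)/ρ)^2 + ρ^2 = 1 := by
      rw [div_pow, hρ2]
      field_simp
      linear_combination (b*c - a*d) * h1 + (c^2 + d^2) * h2
    have hK2mem : (c/ρ)^2 + (d/ρ)^2 = 1 := by
      rw [div_pow, div_pow, hρ2]
      field_simp
    refine ⟨!![(a*c+b*d)/ρ, ρ; -ρ, (a*c+b*d)/ρ], memO1 _ _ hK1mem,
      !![c/ρ, d/ρ; d/ρ, -(c/ρ)], memO2 _ _ hK2mem, ?_⟩
    ext i j
    fin_cases i <;> fin_cases j <;>
      simp [Matrix.mul_apply, Fin.sum_univ_two, Matrix.transpose_apply,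
        Matrix.vecHead, Matrix.vecTail] <;>
      field_simp
    · linear_combination (c^2+d^2-1)*hρ2 + (b*c - a*d)*h1 + (c^2+d^2)*h2
    · linear_combination (a*c+b*d)*h1
    · linear_combination (-(a*c)-b*d)*hρ2
    · linear_combination (b*c - a*d)*hρ2 - (c^2+d^2)*h1

lemma bitHi0 : bitHi 0 = 0 := rfl
lemma bitHi1 : bitHi 1 = 0 := rfl
lemma bitHi2 : bitHi 2 = 1 := rfl
lemma bitHi3 : bitHi 3 = 1 := rfl
lemma bitLo0 : bitLo 0 = 0 := rfl
lemma bitLo1 : bitLo 1 = 1 := rfl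
lemma bitLo2 : bitLo 2 = 0 := rfl
lemma bitLo3 : bitLo 3 = 1 := rfl

def kronR (U V : Matrix (Fin 2) (Fin 2) ℝ) : Matrix (Fin 4) (Fin 4) ℝ :=
  fun i j => U (bitHi i) (bitHi j) * V (bitLo i) (bitLo j)

def czR : Matrix (Fin 4) (Fin 4) ℝ := diagonal ![1, 1, 1, -1]

def vecM (M : Matrix (Fin 2) (Fin 2) ℝ) : Fin 4 → ℝ := ![M 0 0, M 0 1, M 1 0, M 1 1]

def TmR (x : Fin 4 → ℝ) : Matrix (Fin 2) (Fin 2) ℝ := !![x 0, x 1; x 2, x 3]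

lemma kron_vec (U V : Matrix (Fin 2) (Fin 2) ℝ) (x : Fin 4 → ℝ) :
    (kronR U V).mulVec x = vecM (U * TmR x * Vᵀ) := by
  funext i
  fin_cases i <;>
    simp [kronR, vecM, TmR, Matrix.mulVec, dotProduct, Fin.sum_univ_four,
      Matrix.mul_apply, Fin.sum_univ_two, bitHi0, bitHi1, bitHi2, bitHi3,
      bitLo0, bitLo1, bitLo2, bitLo3, Matrix.transpose_apply,
      Matrix.vecHead, Matrix.vecTail] <;> ring

lemma TmR_vecM (M : Matrix (Fin 2) (Fin 2) ℝ) : TmR (vecM M) = M := by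
  ext i j
  fin_cases i <;> fin_cases j <;> simp [TmR, vecM]

lemma cz_vec (M : Matrix (Fin 2) (Fin 2) ℝ) :
    czR.mulVec (vecM M) = vecM !![M 0 0, M 0 1; M 1 0, -M 1 1] := by
  funext i
  fin_cases i <;>
    simp [czR, vecM, Matrix.mulVec, dotProduct, Fin.sum_univ_four,
      Matrix.diagonal]

lemma realmain (x : Fin 4 → ℝ) (hx : x 0^2 + x 1^2 + x 2^2 + x 3^2 = 1) :
    ∃ K₁ ∈ Matrix.orthogonalGroup (Fin 2) ℝ, ∃ K₂ ∈ Matrix.orthogonalGroup (Fin 2) ℝ,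
      ∃ W₁ ∈ Matrix.orthogonalGroup (Fin 2) ℝ,
        (kronR K₁ K₂ * czR * kronR 1 W₁).mulVec x = ![1, 0, 0, 0] := by
  obtain ⟨t, ht⟩ : ∃ t, (x 1 * x 3 - x 0 * x 2) * Real.sin (2*t)
      + (x 0 * x 3 + x 1 * x 2) * Real.cos (2*t) = 0 := by
    set f : ℝ → ℝ := fun t => (x 1 * x 3 - x 0 * x 2) * Real.sin (2*t)
      + (x 0 * x 3 + x 1 * x 2) * Real.cos (2*t) with hf
    have hc : ContinuousOn f (Set.uIcc 0 (Real.pi/2)) := by fun_prop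
    have h0 : f 0 = x 0 * x 3 + x 1 * x 2 := by simp [hf]
    have hπ : f (Real.pi/2) = -(x 0 * x 3 + x 1 * x 2) := by
      rw [hf]
      simp only
      rw [show 2*(Real.pi/2) = Real.pi by ring]
      simp
    have h0mem : (0:ℝ) ∈ Set.uIcc (f 0) (f (Real.pi/2)) := by
      rw [h0, hπ, Set.mem_uIcc]
      rcases le_total 0 (x 0 * x 3 + x 1 * x 2) with h | h
      · right; constructor <;> linarith
      · left; constructor <;> linarith
    obtain ⟨t, _, ht⟩ := intermediate_value_uIcc hc h0mem
    exact ⟨t, ht⟩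
  have hpy : Real.sin t^2 + Real.cos t^2 = 1 := Real.sin_sq_add_cos_sq t
  rw [Real.sin_two_mul, Real.cos_two_mul] at ht
  set ct := Real.cos t
  set st := Real.sin t
  have hdet : (x 0*ct + x 1*st)*(x 2*st - x 3*ct)
      - (-(x 0*st) + x 1*ct)*(x 2*ct + x 3*st) = 0 := by
    linear_combination -ht + (x 0*x 3 + x 1*x 2)*hpy
  have hsum : (x 0*ct + x 1*st)^2 + (-(x 0*st) + x 1*ct)^2
      + (x 2*ct + x 3*st)^2 + (x 2*st - x 3*ct)^2 = 1 := by
    linear_combination (st^2 + ct^2) * hx + hpy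
  obtain ⟨K₁, hK₁, K₂, hK₂, hKN⟩ := keylem _ _ _ _ hdet hsum
  refine ⟨K₁, hK₁, K₂, hK₂, !![ct, st; -st, ct], memO1 ct st (by linarith), ?_⟩
  rw [← Matrix.mulVec_mulVec, ← Matrix.mulVec_mulVec,
    kron_vec 1 !![ct, st; -st, ct] x, cz_vec, kron_vec, TmR_vecM]
  set M : Matrix (Fin 2) (Fin 2) ℝ := 1 * TmR x * !![ct, st; -st, ct]ᵀ with hMdef
  have hmid : !![M 0 0, M 0 1; M 1 0, -M 1 1]
      = !![x 0*ct + x 1*st, -(x 0*st) + x 1*ct; x 2*ct + x 3*st, x 2*st - x 3*ct] := by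
    ext i j
    fin_cases i <;> fin_cases j <;>
      simp [hMdef, Matrix.mul_apply, Fin.sum_univ_two, TmR, Matrix.transpose_apply,
        Matrix.vecHead, Matrix.vecTail, Matrix.vecMul, dotProduct] <;> ring
  rw [hmid, hKN]
  funext i
  fin_cases i <;> simp [vecM]


lemma kron2_mc (U V : Matrix (Fin 2) (Fin 2) ℝ) :
    kron2 (mc U) (mc V) = (kronR U V).map (fun r => (r : ℂ)) := by
  ext i j
  simp [kron2, kronR, mc, Matrix.map_apply]

lemma kron2_one_mc (V : Matrix (Fin 2) (Fin 2) ℝ) :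
    kron2 1 (mc V) = (kronR 1 V).map (fun r => (r : ℂ)) := by
  ext i j
  by_cases h : bitHi i = bitHi j <;>
    simp [kron2, kronR, mc, Matrix.map_apply, Matrix.one_apply, h]

lemma cz_bridge : czGate = czR.map (fun r => (r : ℂ)) := by
  ext i j
  fin_cases i <;> fin_cases j <;>
    simp [czGate, czR, Matrix.diagonal, Matrix.map_apply]

lemma map_mul4 (A B : Matrix (Fin 4) (Fin 4) ℝ) :
    (A * B).map (fun r => (r : ℂ)) = A.map (fun r => (r : ℂ)) * B.map (fun r => (r : ℂ)) := by
  ext i j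
  simp [Matrix.mul_apply, Fin.sum_univ_four, Matrix.map_apply]

lemma map_mulVec4 (M : Matrix (Fin 4) (Fin 4) ℝ) (x : Fin 4 → ℝ) :
    (M.map (fun r => (r : ℂ))).mulVec (fun i => ((x i : ℝ) : ℂ))
      = fun i => (((M.mulVec x) i : ℝ) : ℂ) := by
  funext i
  simp [Matrix.mulVec, dotProduct, Fin.sum_univ_four, Matrix.map_apply]

/-- every real 2-qubit state can be prepared using real local gates and at
most one controlled-Z gate: `(K₁ ⊗ K₂)·cz·(I ⊗ W₁)·φ = |00⟩` with `K₁, K₂, W₁` real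
orthogonal. -/
theorem stmt_17 (φ : Fin 4 → ℂ) (hunit : ∑ i, ‖φ i‖ ^ 2 = 1)
    (hreal : ∀ i, (φ i).im = 0) :
    ∃ K₁ ∈ Matrix.orthogonalGroup (Fin 2) ℝ, ∃ K₂ ∈ Matrix.orthogonalGroup (Fin 2) ℝ,
      ∃ W₁ ∈ Matrix.orthogonalGroup (Fin 2) ℝ,
        (kron2 (mc K₁) (mc K₂) * czGate * kron2 1 (mc W₁)).mulVec φ = e00 := by
  set x : Fin 4 → ℝ := fun i => (φ i).re with hxdef
  have hφ : φ = fun i => ((x i : ℝ) : ℂ) := by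
    funext i
    exact (Complex.ext (by simp [hxdef]) (by simp [hxdef, hreal i])).symm
  have hnorm : ∀ i, ‖φ i‖ ^ 2 = x i ^ 2 := by
    intro i
    rw [hxdef, Complex.sq_norm, Complex.normSq_apply, hreal i]
    ring
  have hx : x 0 ^ 2 + x 1 ^ 2 + x 2 ^ 2 + x 3 ^ 2 = 1 := by
    rw [Fin.sum_univ_four, hnorm 0, hnorm 1, hnorm 2, hnorm 3] at hunit
    exact hunit
  obtain ⟨K₁, hK₁, K₂, hK₂, W₁, hW₁, heq⟩ := realmain x hx
  refine ⟨K₁, hK₁, K₂, hK₂, W₁, hW₁, ?_⟩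
  have h1 : kron2 (mc K₁) (mc K₂) * czGate * kron2 1 (mc W₁)
      = (kronR K₁ K₂ * czR * kronR 1 W₁).map (fun r => (r : ℂ)) := by
    rw [map_mul4, map_mul4, kron2_mc, kron2_one_mc, cz_bridge]
  rw [h1, hφ, map_mulVec4, heq]
  funext i
  fin_cases i <;> simp [e00]
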